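/- Let F be a variable convex CNF with convexity ordering σ and prefix π. Let f : var(π) → {0,1} be an assignment not satisfying the set A of var(π)-active clauses. Then among the clauses of A not satisfied by f there is a unique one, t, whose restriction to literals on var(π) is inclusion-maximal, and the set of clauses of A not satisfied by f is exactly { c ∈ A : {l ∈ c : var(l) ∈ var(π)} ⊆ {l ∈ t : var(l) ∈ var(π)} }. -/

import Mathlib

abbrev Var := ℕ
abbrev Lit := Var × Bool
abbrev Clause := Finset Lit
abbrev CNF := Finset Clause

def varsClause (c : Clause) : Finset Var := c.image Prod.fst
def varsCNF (F : CNF) : Finset Var := F.sup varsClause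
def sizeCNF (F : CNF) : ℕ := ∑ c ∈ F, c.card

def satClauseOn (X : Finset Var) (f : Var → Bool) (c : Clause) : Prop :=
  ∃ l ∈ c, l.1 ∈ X ∧ f l.1 = l.2

instance (X : Finset Var) (f : Var → Bool) : DecidablePred (satClauseOn X f) := fun c => by
  unfold satClauseOn; infer_instance

def restrict (F : CNF) (X : Finset Var) (f : Var → Bool) : CNF :=
  (F.filter (fun c => ¬ satClauseOn X f c)).image (fun c => c.filter (fun l => l.1 ∉ X))

def st (F : CNF) (X : Finset Var) : Set CNF := { G | ∃ f : Var → Bool, G = restrict F X f }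

noncomputable def stw (F : CNF) (σ : List Var) : ℕ :=
  (Finset.Icc 1 σ.length).sup fun i => (st F ((σ.take i).toFinset)).ncard

def satCNF (F : CNF) (f : Var → Bool) : Prop := ∀ c ∈ F, ∃ l ∈ c, f l.1 = l.2

structure OBDD (σ : List Var) where
  size : ℕ
  label : Fin size → (Fin σ.length) ⊕ Bool
  succ : Fin size → Bool → Fin size
  source : Fin size
  ordered : ∀ v i, label v = Sum.inl i → ∀ b j, label (succ v b) = Sum.inl j → i < j

def OBDD.evalAux {σ : List Var} (D : OBDD σ) (f : Var → Bool) : ℕ → Fin D.size → Bool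
  | 0, v => match D.label v with | .inr b => b | .inl _ => false
  | n+1, v => match D.label v with
    | .inr b => b
    | .inl i => D.evalAux f n (D.succ v (f (σ.get i)))

def OBDD.eval {σ : List Var} (D : OBDD σ) (f : Var → Bool) : Bool :=
  D.evalAux f (σ.length + 1) D.source

def OBDD.computes {σ : List Var} (D : OBDD σ) (F : CNF) : Prop :=
  ∀ f : Var → Bool, D.eval f = true ↔ satCNF F f

/-- σ witnesses left convexity of the incidence graph of F (variable convexity). -/
def ConvexWitness (F : CNF) (σ : List Var) : Prop :=
  ∀ c ∈ F, ∀ v ∈ varsClause c, ∀ v' ∈ varsClause c, ∀ v'' ∈ σ.toFinset,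
    σ.idxOf v < σ.idxOf v'' → σ.idxOf v'' < σ.idxOf v' → v'' ∈ varsClause c

theorem idx_lt_of_mem_take {σ : List ℕ} {i u : ℕ} (h : u ∈ σ.take i) : σ.idxOf u < i := by
  have := List.idxOf_append_of_mem (l₂ := σ.drop i) h
  rw [List.take_append_drop] at this
  rw [this]
  exact lt_of_lt_of_le (List.idxOf_lt_length_iff.2 h) (by simp [List.length_take])

theorem mem_take_of_idx_lt {σ : List ℕ} {i u : ℕ} (hm : u ∈ σ) (h : σ.idxOf u < i) : u ∈ σ.take i := by
  have hl : σ.idxOf u < σ.length := List.idxOf_lt_length_iff.2 hm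
  have : (σ.take i)[σ.idxOf u]'(by simp [hl, h]) = u := by
    rw [List.getElem_take]; exact List.getElem_idxOf hl
  exact this ▸ List.getElem_mem _

/-- for a variable convex CNF with prefix variables X = var(π) and an
assignment f not satisfying the set A of var(π)-active clauses, among the clauses of A
not satisfied by f there is one, t, whose restriction to literals on X is
inclusion-maximal, this maximal restriction is unique, and the unsatisfied clauses of A
are exactly those whose X-restriction is contained in that of t. -/
theorem convex_maximal_unsatisfied_clause (F : CNF) (σ : List Var)
    (hnd : σ.Nodup) (hv : σ.toFinset = varsCNF F) (hconv : ConvexWitness F σ)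
    (i : ℕ) (hi : i ≤ σ.length) (f : Var → Bool)
    (A : CNF)
    (hA : A = F.filter (fun c => (varsClause c ∩ (σ.take i).toFinset).Nonempty ∧
            (varsClause c \ (σ.take i).toFinset).Nonempty))
    (hunsat : ∃ c ∈ A, ¬ satClauseOn ((σ.take i).toFinset) f c) :
    ∃ t ∈ A, ¬ satClauseOn ((σ.take i).toFinset) f t ∧
      (∀ c ∈ A, ¬ satClauseOn ((σ.take i).toFinset) f c →
        c.filter (fun l => l.1 ∈ (σ.take i).toFinset) ⊆
          t.filter (fun l => l.1 ∈ (σ.take i).toFinset)) ∧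
      (∀ t' ∈ A, ¬ satClauseOn ((σ.take i).toFinset) f t' →
        (∀ c ∈ A, ¬ satClauseOn ((σ.take i).toFinset) f c →
          c.filter (fun l => l.1 ∈ (σ.take i).toFinset) ⊆
            t'.filter (fun l => l.1 ∈ (σ.take i).toFinset)) →
        t'.filter (fun l => l.1 ∈ (σ.take i).toFinset) =
          t.filter (fun l => l.1 ∈ (σ.take i).toFinset)) ∧
      (A.filter (fun c => ¬ satClauseOn ((σ.take i).toFinset) f c) =
        A.filter (fun c => c.filter (fun l => l.1 ∈ (σ.take i).toFinset) ⊆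
          t.filter (fun l => l.1 ∈ (σ.take i).toFinset))) := by
  set X := (σ.take i).toFinset with hX
  -- basic facts
  have hXσ : ∀ u ∈ X, u ∈ σ.toFinset := by
    intro u hu
    simp only [hX, List.mem_toFinset] at hu ⊢
    exact List.mem_of_mem_take hu
  have hvarsσ : ∀ c ∈ A, ∀ v ∈ varsClause c, v ∈ σ.toFinset := by
    intro c hc v hvc
    rw [hA, Finset.mem_filter] at hc
    rw [hv]
    exact Finset.mem_sup.2 ⟨c, hc.1, hvc⟩
  have hidx_inj : ∀ u ∈ σ.toFinset, ∀ v ∈ σ.toFinset, σ.idxOf u = σ.idxOf v → u = v := by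
    intro u hu v hv h
    simp only [List.mem_toFinset] at hu hv
    exact (List.idxOf_inj hu).1 h
  -- suffix lemma
  have hsuffix : ∀ c ∈ A, ∀ v ∈ varsClause c ∩ X, ∀ u ∈ X,
      σ.idxOf v ≤ σ.idxOf u → u ∈ varsClause c ∩ X := by
    intro c hc v hvX u huX hle
    have hcF : c ∈ F := by rw [hA, Finset.mem_filter] at hc; exact hc.1
    obtain ⟨hvC, hvXm⟩ := Finset.mem_inter.1 hvX
    rcases eq_or_lt_of_le hle with heq | hlt
    · have : v = u := hidx_inj v (hvarsσ c hc v hvC) u (hXσ u huX) heq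
      exact this ▸ hvX
    · -- get w outside X
      have hAc : (varsClause c \ X).Nonempty := by
        rw [hA, Finset.mem_filter] at hc; exact hc.2.2
      obtain ⟨w, hw⟩ := hAc
      obtain ⟨hwC, hwX⟩ := Finset.mem_sdiff.1 hw
      have hwσ : w ∈ σ := List.mem_toFinset.1 (hvarsσ c hc w hwC)
      have hwi : i ≤ σ.idxOf w := by
        by_contra h
        exact hwX (List.mem_toFinset.2 (mem_take_of_idx_lt hwσ (lt_of_not_ge h)))
      have hui : σ.idxOf u < i := idx_lt_of_mem_take (List.mem_toFinset.1 huX)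
      have := hconv c hcF v hvC w hwC u (hXσ u huX) hlt (lt_of_lt_of_le hui hwi)
      exact Finset.mem_inter.2 ⟨this, huX⟩
  -- comparability
  have hcomp : ∀ c ∈ A, ∀ c' ∈ A,
      varsClause c ∩ X ⊆ varsClause c' ∩ X ∨ varsClause c' ∩ X ⊆ varsClause c ∩ X := by
    intro c hc c' hc'
    by_cases h : varsClause c ∩ X ⊆ varsClause c' ∩ X
    · exact Or.inl h
    · right
      obtain ⟨v, hvc, hvc'⟩ := Finset.not_subset.1 h
      intro u hu
      have hvX : v ∈ X := (Finset.mem_inter.1 hvc).2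
      have huX : u ∈ X := (Finset.mem_inter.1 hu).2
      have : ¬ σ.idxOf u ≤ σ.idxOf v := fun hle => hvc' (hsuffix c' hc' u hu v hvX hle)
      exact hsuffix c hc v hvc u huX (le_of_not_ge this)
  -- filter characterization for unsatisfied clauses
  have hfilt : ∀ c : Clause, ¬ satClauseOn X f c →
      c.filter (fun l => l.1 ∈ X) = (varsClause c ∩ X).image (fun v => (v, !f v)) := by
    intro c hcu
    ext l
    simp only [Finset.mem_filter, Finset.mem_image, Finset.mem_inter, varsClause,
      Finset.mem_image]
    constructor
    · rintro ⟨hlc, hlX⟩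
      refine ⟨l.1, ⟨⟨l, hlc, rfl⟩, hlX⟩, ?_⟩
      have : f l.1 ≠ l.2 := fun h => hcu ⟨l, hlc, hlX, h⟩
      cases l with | mk v b => cases b <;> simp_all
    · rintro ⟨v, ⟨⟨l', hl'c, hl'v⟩, hvX⟩, rfl⟩
      have hne : f l'.1 ≠ l'.2 := fun h => hcu ⟨l', hl'c, hl'v ▸ hvX, h⟩
      have : l' = (v, !f v) := by
        cases l' with | mk w b => cases b <;> simp_all
      exact ⟨this ▸ hl'c, hvX⟩
  have hmono : ∀ c t : Clause, ¬ satClauseOn X f c → ¬ satClauseOn X f t →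
      varsClause c ∩ X ⊆ varsClause t ∩ X →
      c.filter (fun l => l.1 ∈ X) ⊆ t.filter (fun l => l.1 ∈ X) := by
    intro c t hcu htu hsub
    rw [hfilt c hcu, hfilt t htu]
    exact Finset.image_subset_image hsub
  -- choose t maximizing card
  obtain ⟨c₀, hc₀A, hc₀u⟩ := hunsat
  set S := A.filter (fun c => ¬ satClauseOn X f c) with hS
  have hc₀S : c₀ ∈ S := Finset.mem_filter.2 ⟨hc₀A, hc₀u⟩
  obtain ⟨t, htS, htmax⟩ := S.exists_max_image (fun c => (varsClause c ∩ X).card) ⟨c₀, hc₀S⟩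
  have htA : t ∈ A := (Finset.mem_filter.1 htS).1
  have htu : ¬ satClauseOn X f t := (Finset.mem_filter.1 htS).2
  have hmax : ∀ c ∈ A, ¬ satClauseOn X f c →
      c.filter (fun l => l.1 ∈ X) ⊆ t.filter (fun l => l.1 ∈ X) := by
    intro c hcA hcu
    refine hmono c t hcu htu ?_
    rcases hcomp c hcA t htA with h | h
    · exact h
    · have hcard := htmax c (Finset.mem_filter.2 ⟨hcA, hcu⟩)
      exact le_of_eq (Finset.eq_of_subset_of_card_le h hcard).symm
  refine ⟨t, htA, htu, hmax, ?_, ?_⟩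
  · intro t' ht'A ht'u ht'max
    exact Finset.Subset.antisymm (hmax t' ht'A ht'u) (ht'max t htA htu)
  · ext c
    simp only [hS, Finset.mem_filter]
    constructor
    · rintro ⟨hcA, hcu⟩
      exact ⟨hcA, hmax c hcA hcu⟩
    · rintro ⟨hcA, hsub⟩
      refine ⟨hcA, fun hsat => ?_⟩
      obtain ⟨l, hlc, hlX, hlf⟩ := hsat
      have : l ∈ t.filter (fun l => l.1 ∈ X) := hsub (Finset.mem_filter.2 ⟨hlc, hlX⟩)
      obtain ⟨hlt, hltX⟩ := Finset.mem_filter.1 this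
      exact htu ⟨l, hlt, hltX, hlf⟩
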